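/- Let C = {c_1, ..., c_r} be a color set and f: C -> non-negative integers with sum of f(c_i) equal to n - m. An edge-colored graph G of order n has a spanning forest with exactly m components and exactly f(c_i) edges of color c_i for each i, if and only if for every subset R of C, the number of components of G - E_R(G) is at most m + sum over c in R of f(c). -/

import Mathlib

open SimpleGraph Finset

/-- Number of connected components of a graph. -/
noncomputable def omega {V : Type*} (G : SimpleGraph V) : ℕ :=
  Nat.card G.ConnectedComponent

/-- Number of edges of `G` having color `c`. -/
noncomputable def colorCount {V C : Type*} (G : SimpleGraph V)
    (color : Sym2 V → C) (c : C) : ℕ :=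
  Nat.card {e : Sym2 V // e ∈ G.edgeSet ∧ color e = c}

/-- `G` is `f`-chromatic: each color `c` appears on at most `f c` edges. -/
def IsChromatic {V C : Type*} (G : SimpleGraph V)
    (color : Sym2 V → C) (f : C → ℕ) : Prop :=
  ∀ c, colorCount G color c ≤ f c

/-- `G - E_R(G)` : delete all edges whose color lies in `R`. -/
def delR {V C : Type*} (G : SimpleGraph V) (color : Sym2 V → C)
    (R : Finset C) : SimpleGraph V :=
  G.deleteEdges {e | color e ∈ R}


/-! ### Auxiliary lemmas -/

section GraphAux

variable {V : Type*}
private lemma reach_sup_edge {H : SimpleGraph V} {a b u v : V}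
    (h : (H ⊔ edge a b).Reachable u v) :
    H.Reachable u v ∨ (H.Reachable u a ∧ H.Reachable b v) ∨
      (H.Reachable u b ∧ H.Reachable a v) := by
  obtain ⟨w⟩ := h
  induction w with
  | nil => exact Or.inl (Reachable.refl _)
  | @cons x y z hxy p ih =>
    rw [sup_adj] at hxy
    rcases hxy with hxy | hxy
    · have hr : H.Reachable x y := hxy.reachable
      rcases ih with h1 | ⟨h1, h2⟩ | ⟨h1, h2⟩
      · exact Or.inl (hr.trans h1)
      · exact Or.inr (Or.inl ⟨hr.trans h1, h2⟩)
      · exact Or.inr (Or.inr ⟨hr.trans h1, h2⟩)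
    · rw [edge_adj] at hxy
      obtain ⟨(⟨rfl, rfl⟩ | ⟨rfl, rfl⟩), hne⟩ := hxy
      · rcases ih with h1 | ⟨h1, h2⟩ | ⟨h1, h2⟩
        · exact Or.inr (Or.inl ⟨Reachable.refl _, h1⟩)
        · exact Or.inl (h1.symm.trans h2)
        · exact Or.inl h2
      · rcases ih with h1 | ⟨h1, h2⟩ | ⟨h1, h2⟩
        · exact Or.inr (Or.inr ⟨Reachable.refl _, h1⟩)
        · exact Or.inl h2
        · exact Or.inl (h1.symm.trans h2)

private instance {H : SimpleGraph V} [Finite V] : Finite H.ConnectedComponent :=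
  Finite.of_surjective H.connectedComponentMk
    (ConnectedComponent.ind fun v => ⟨v, rfl⟩)

variable [Fintype V]

private lemma omega_le_card (H : SimpleGraph V) : omega H ≤ Fintype.card V := by
  have hs : Function.Surjective H.connectedComponentMk :=
    ConnectedComponent.ind fun v => ⟨v, rfl⟩
  simpa [omega, Nat.card_eq_fintype_card] using Nat.card_le_card_of_surjective _ hs

private lemma omega_bot : omega (⊥ : SimpleGraph V) = Fintype.card V := by
  have hb : Function.Bijective (⊥ : SimpleGraph V).connectedComponentMk := by
    refine ⟨fun u v h => ?_, ConnectedComponent.ind fun v => ⟨v, rfl⟩⟩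
    · exact reachable_bot.mp (ConnectedComponent.exact h)
  simpa [omega, Nat.card_eq_fintype_card] using (Nat.card_eq_of_bijective _ hb).symm

private lemma omega_mono {H H' : SimpleGraph V} (h : H ≤ H') : omega H' ≤ omega H := by
  have hs : Function.Surjective (ConnectedComponent.map (Hom.ofLE h)) := by
    intro c
    refine c.ind fun v => ⟨H.connectedComponentMk v, ?_⟩
    simp [ConnectedComponent.map_mk, Hom.ofLE_apply]
  exact Nat.card_le_card_of_surjective _ hs

private lemma omega_sup_edge_of_reachable {H : SimpleGraph V} {a b : V}
    (h : H.Reachable a b) : omega (H ⊔ edge a b) = omega H := by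
  have hle : H ≤ H ⊔ edge a b := le_sup_left
  have hbij : Function.Bijective (ConnectedComponent.map (Hom.ofLE hle)) := by
    constructor
    · refine ConnectedComponent.ind₂ fun u v huv => ?_
      simp only [ConnectedComponent.map_mk, Hom.ofLE_apply] at huv
      rw [ConnectedComponent.eq] at huv ⊢
      rcases reach_sup_edge huv with h1 | ⟨h1, h2⟩ | ⟨h1, h2⟩
      · exact h1
      · exact h1.trans (h.trans h2)
      · exact h1.trans (h.symm.trans h2)
    · intro c
      refine c.ind fun v => ⟨H.connectedComponentMk v, ?_⟩
      simp [ConnectedComponent.map_mk, Hom.ofLE_apply]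
  exact (Nat.card_eq_of_bijective _ hbij).symm

private lemma omega_sup_edge_of_not_reachable {H : SimpleGraph V} {a b : V}
    (hab : a ≠ b) (h : ¬H.Reachable a b) :
    omega H = omega (H ⊔ edge a b) + 1 := by
  classical
  have hle : H ≤ H ⊔ edge a b := le_sup_left
  set φ : H.ConnectedComponent → (H ⊔ edge a b).ConnectedComponent :=
    ConnectedComponent.map (Hom.ofLE hle) with hφ
  set cb := H.connectedComponentMk b with hcb
  have hφmk : ∀ v, φ (H.connectedComponentMk v) = (H ⊔ edge a b).connectedComponentMk v :=
    fun v => rfl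
  have hinj : ∀ x y : H.ConnectedComponent, φ x = φ y → x ≠ cb → y ≠ cb → x = y := by
    refine ConnectedComponent.ind₂ fun u v huv hu hv => ?_
    rw [hφmk, hφmk, ConnectedComponent.eq] at huv
    rw [ConnectedComponent.eq]
    rcases reach_sup_edge huv with h1 | ⟨h1, h2⟩ | ⟨h1, h2⟩
    · exact h1
    · exact absurd (ConnectedComponent.sound h2.symm) hv
    · exact absurd (ConnectedComponent.sound h1) hu
  have hsurj : ∀ y : (H ⊔ edge a b).ConnectedComponent,
      ∃ x : {x : H.ConnectedComponent // x ≠ cb}, φ x.1 = y := by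
    refine ConnectedComponent.ind fun v => ?_
    by_cases hv : H.connectedComponentMk v = cb
    · have ha' : H.connectedComponentMk a ≠ cb := fun hc =>
        h (ConnectedComponent.exact hc)
      refine ⟨⟨_, ha'⟩, ?_⟩
      rw [hφmk, ConnectedComponent.eq]
      have hadj : (H ⊔ edge a b).Adj a b := by
        rw [sup_adj, edge_adj]
        exact Or.inr ⟨Or.inl ⟨rfl, rfl⟩, hab⟩
      have hbv : H.Reachable v b := ConnectedComponent.exact hv
      exact hadj.reachable.trans (hbv.mono hle).symm
    · exact ⟨⟨_, hv⟩, rfl⟩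
  have hbij : Function.Bijective
      (fun x : {x : H.ConnectedComponent // x ≠ cb} => φ x.1) := by
    refine ⟨fun x y hxy => Subtype.ext (hinj _ _ hxy x.2 y.2), hsurj⟩
  have hbij2 : Function.Bijective
      (fun o : Option {x : H.ConnectedComponent // x ≠ cb} => o.elim cb (·.1)) := by
    constructor
    · rintro (_ | x) (_ | y) hxy
      · rfl
      · exact absurd hxy.symm y.2
      · exact absurd hxy x.2
      · exact congrArg _ (Subtype.ext hxy)
    · intro x
      by_cases hx : x = cb
      · exact ⟨none, hx.symm⟩
      · exact ⟨some ⟨x, hx⟩, rfl⟩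
  letI : Fintype {x : H.ConnectedComponent // x ≠ cb} := Fintype.ofFinite _
  have h1 : omega (H ⊔ edge a b) = Fintype.card {x : H.ConnectedComponent // x ≠ cb} := by
    rw [omega, ← Nat.card_eq_of_bijective _ hbij, Nat.card_eq_fintype_card]
  have h2 : omega H = Fintype.card {x : H.ConnectedComponent // x ≠ cb} + 1 := by
    rw [omega, ← Nat.card_eq_of_bijective _ hbij2, Nat.card_eq_fintype_card,
      Fintype.card_option]
  rw [h1, h2]

end GraphAux

section RankAux

variable {V : Type*} [Fintype V] [DecidableEq V]
private noncomputable def rk (S : Finset (Sym2 V)) : ℕ :=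
  Fintype.card V - omega (fromEdgeSet (S : Set (Sym2 V)))

private lemma fE_insert (a b : V) (S : Finset (Sym2 V)) :
    fromEdgeSet ((insert s(a, b) S : Finset (Sym2 V)) : Set (Sym2 V)) =
      fromEdgeSet (S : Set (Sym2 V)) ⊔ edge a b := by
  rw [Finset.coe_insert, Set.insert_eq, fromEdgeSet_union, sup_comm]
  rfl

private lemma omega_insert_of_reachable {S : Finset (Sym2 V)} {a b : V}
    (h : a = b ∨ (fromEdgeSet (S : Set (Sym2 V))).Reachable a b) :
    omega (fromEdgeSet ((insert s(a, b) S : Finset (Sym2 V)) : Set (Sym2 V))) =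
      omega (fromEdgeSet (S : Set (Sym2 V))) := by
  rw [fE_insert]
  rcases h with rfl | h
  · rw [sup_edge_self]
  · exact omega_sup_edge_of_reachable h

private lemma omega_insert_of_not_reachable {S : Finset (Sym2 V)} {a b : V}
    (hab : a ≠ b) (h : ¬(fromEdgeSet (S : Set (Sym2 V))).Reachable a b) :
    omega (fromEdgeSet (S : Set (Sym2 V))) =
      omega (fromEdgeSet ((insert s(a, b) S : Finset (Sym2 V)) : Set (Sym2 V))) + 1 := by
  rw [fE_insert]
  exact omega_sup_edge_of_not_reachable hab h

private lemma rk_empty : rk (∅ : Finset (Sym2 V)) = 0 := by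
  simp [rk, omega_bot]

private lemma rk_mono {S T : Finset (Sym2 V)} (h : S ⊆ T) : rk S ≤ rk T :=
  Nat.sub_le_sub_left (omega_mono (fromEdgeSet_mono (Finset.coe_subset.2 h))) _

private lemma rk_insert_le (S : Finset (Sym2 V)) (e : Sym2 V) :
    rk (insert e S) ≤ rk S + 1 := by
  induction e using Sym2.ind with
  | _ a b =>
    by_cases h : a = b ∨ (fromEdgeSet (S : Set (Sym2 V))).Reachable a b
    · rw [rk, rk, omega_insert_of_reachable h]
      omega
    · push_neg at h
      have h1 := omega_insert_of_not_reachable h.1 h.2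
      have h2 := omega_le_card (fromEdgeSet (S : Set (Sym2 V)))
      rw [rk, rk]
      omega

private lemma rk_local_submod {S T : Finset (Sym2 V)} (hST : S ⊆ T) (e : Sym2 V) :
    rk (insert e T) + rk S ≤ rk (insert e S) + rk T := by
  induction e using Sym2.ind with
  | _ a b =>
    by_cases h : a = b ∨ (fromEdgeSet (S : Set (Sym2 V))).Reachable a b
    · have hT : a = b ∨ (fromEdgeSet (T : Set (Sym2 V))).Reachable a b := by
        rcases h with rfl | h
        · exact Or.inl rfl
        · exact Or.inr (h.mono (fromEdgeSet_mono (Finset.coe_subset.2 hST)))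
      rw [rk, rk, rk, rk, omega_insert_of_reachable h, omega_insert_of_reachable hT]
      omega
    · push_neg at h
      have h1 := omega_insert_of_not_reachable h.1 h.2
      have h2 := omega_le_card (fromEdgeSet ((insert s(a, b) S : Finset (Sym2 V)) : Set (Sym2 V)))
      have h3 := rk_insert_le T s(a, b)
      have h4 := rk_mono hST
      have h2' := omega_le_card (fromEdgeSet (S : Set (Sym2 V)))
      have h5 : rk (insert s(a, b) S) = rk S + 1 := by
        simp only [rk]
        omega
      omega

private lemma rk_submod_aux (U : Finset (Sym2 V)) :
    ∀ S T : Finset (Sym2 V), S ⊆ T → rk (T ∪ U) + rk S ≤ rk (S ∪ U) + rk T := by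
  induction U using Finset.induction with
  | empty => intro S T hST; rw [Finset.union_empty, Finset.union_empty]; omega
  | @insert a U ha ih =>
    intro S T hST
    rw [Finset.union_insert, Finset.union_insert]
    have h1 := rk_local_submod (Finset.union_subset_union_left (t := U) hST) a
    have h2 := ih S T hST
    omega

private lemma rk_submod (S T : Finset (Sym2 V)) :
    rk (S ∪ T) + rk (S ∩ T) ≤ rk S + rk T := by
  have h := rk_submod_aux T (S ∩ T) S Finset.inter_subset_left
  rw [Finset.union_eq_right.2 Finset.inter_subset_right] at h
  omega

private lemma forest_count (S : Finset (Sym2 V)) :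
    (∀ e ∈ S, ¬e.IsDiag) →
      Fintype.card V ≤ omega (fromEdgeSet (S : Set (Sym2 V))) + S.card ∧
      ((fromEdgeSet (S : Set (Sym2 V))).IsAcyclic ↔
        omega (fromEdgeSet (S : Set (Sym2 V))) + S.card = Fintype.card V) := by
  induction S using Finset.induction with
  | empty => simp [omega_bot]
  | @insert e S he ih =>
    induction e using Sym2.ind with
    | _ a b =>
      intro hins
      have hab : a ≠ b := by
        have := hins s(a, b) (Finset.mem_insert_self _ _)
        simpa [Sym2.mk_isDiag_iff] using this
      have hS : ∀ e ∈ S, ¬e.IsDiag := fun e h => hins e (Finset.mem_insert_of_mem h)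
      obtain ⟨ih1, ih2⟩ := ih hS
      have hcard := Finset.card_insert_of_notMem he
      have hdel : (fromEdgeSet (S : Set (Sym2 V)) ⊔ edge a b) \ fromEdgeSet {s(a, b)} =
          fromEdgeSet (S : Set (Sym2 V)) := by
        have hnd : ¬(s(a, b) : Sym2 V).IsDiag := by simp [Sym2.mk_isDiag_iff, hab]
        rw [← edgeSet_inj, edgeSet_sdiff, edgeSet_sup, edgeSet_fromEdgeSet,
          edgeSet_fromEdgeSet, edge_edgeSet_of_ne hab]
        ext x
        simp only [Set.mem_diff, Set.mem_union, Set.mem_singleton_iff, Set.mem_setOf_eq,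
          Finset.mem_coe]
        constructor
        · rintro ⟨⟨hx, hd⟩ | rfl, hne⟩
          · exact ⟨hx, hd⟩
          · exact absurd ⟨rfl, hnd⟩ hne
        · intro ⟨hx, hd⟩
          refine ⟨Or.inl ⟨hx, hd⟩, ?_⟩
          rintro ⟨rfl, -⟩
          exact he hx
      by_cases hr : (fromEdgeSet (S : Set (Sym2 V))).Reachable a b
      · have hω := omega_insert_of_reachable (Or.inr hr)
        rw [hω, hcard]
        constructor
        · omega
        · constructor
          · intro hacy
            exfalso
            rw [fE_insert] at hacy
            have hadj : (fromEdgeSet (S : Set (Sym2 V)) ⊔ edge a b).Adj a b := by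
              rw [sup_adj, edge_adj]
              exact Or.inr ⟨Or.inl ⟨rfl, rfl⟩, hab⟩
            have hbr := isAcyclic_iff_forall_adj_isBridge.1 hacy hadj
            rw [isBridge_iff, deleteEdges, hdel] at hbr
            exact hbr hr
          · intro h
            exfalso
            omega
      · have hω := omega_insert_of_not_reachable hab hr
        rw [hcard]
        refine ⟨by omega, ?_⟩
        have hiff : (fromEdgeSet ((insert s(a, b) S : Finset (Sym2 V)) : Set (Sym2 V))).IsAcyclic ↔
            (fromEdgeSet (S : Set (Sym2 V))).IsAcyclic := by
          rw [fE_insert]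
          constructor
          · intro hacy v c hc
            exact hacy (c.mapLe le_sup_left) (hc.mapLe _)
          · intro hacy v c hc
            by_cases hce : s(a, b) ∈ c.edges
            · have := adj_and_reachable_delete_edges_iff_exists_cycle.mpr ⟨v, c, hc, hce⟩
              rw [deleteEdges, hdel] at this
              exact hr this.2
            · have hsub : ∀ e' ∈ c.edges,
                  e' ∈ (fromEdgeSet (S : Set (Sym2 V))).edgeSet := by
                intro e' he'
                have hbig := c.edges_subset_edgeSet he'
                rw [edgeSet_sup, edgeSet_fromEdgeSet, edge_edgeSet_of_ne hab] at hbig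
                rw [edgeSet_fromEdgeSet]
                rcases hbig with h' | h'
                · exact h'
                · exact absurd (h' ▸ hce) (fun hh => hce (h' ▸ he'))
              exact hacy (c.transfer _ hsub) (hc.transfer _)
        rw [hiff, ih2]
        omega


end RankAux

private lemma rado {E : Type*} {C : Type*} [DecidableEq E] [DecidableEq C] [Fintype C] :
    ∀ (N : ℕ) (r : Finset E → ℕ) (f : C → ℕ) (ground : Finset E) (color : E → C),
      (∑ c, f c = N) → r ∅ = 0 →
      (∀ S T, S ⊆ T → r S ≤ r T) →
      (∀ S e, r (insert e S) ≤ r S + 1) →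
      (∀ S T, r (S ∪ T) + r (S ∩ T) ≤ r S + r T) →
      (∀ D : Finset C, ∑ c ∈ D, f c ≤ r (ground.filter fun e => color e ∈ D)) →
      ∃ S, S ⊆ ground ∧ r S = S.card ∧ ∀ c, (S.filter fun e => color e = c).card = f c := by
  intro N
  induction N with
  | zero =>
    intro r f ground color hsum h0 _ _ _ _
    have hf : ∀ c, f c = 0 := fun c => Finset.sum_eq_zero_iff.1 hsum c (mem_univ c)
    exact ⟨∅, empty_subset _, by simp [h0], fun c => by simp [hf c]⟩
  | succ N ihN =>
    intro r f ground color hsum h0 hmono hunit hsub hcond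
    obtain ⟨c0, hc0⟩ : ∃ c, 0 < f c := by
      by_contra hno
      push_neg at hno
      have : ∑ c, f c = 0 := Finset.sum_eq_zero fun c _ => Nat.le_zero.1 (hno c)
      omega
    set A : Finset C → Finset E := fun D => ground.filter (fun e => color e ∈ D) with hA
    have hcond' : ∀ D : Finset C, ∑ c ∈ D, f c ≤ r (A D) := fun D => by
      rw [hA]; exact hcond D
    have hAmono : ∀ {D D' : Finset C}, D ⊆ D' → A D ⊆ A D' := by
      intro D D' h x hx
      simp only [hA, Finset.mem_filter] at hx ⊢
      exact ⟨hx.1, h hx.2⟩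
    have hAunion : ∀ D D' : Finset C, A (D ∪ D') = A D ∪ A D' := by
      intro D D'
      ext x
      simp only [hA, Finset.mem_filter, Finset.mem_union]
      tauto
    have hAinter : ∀ D D' : Finset C, A (D ∩ D') = A D ∩ A D' := by
      intro D D'
      ext x
      simp only [hA, Finset.mem_filter, Finset.mem_inter]
      tauto
    have hAempty : A ∅ = ∅ := by
      simp [hA]
    have hclos : ∀ (S T : Finset E) (e : E), S ⊆ T → r (insert e S) = r S →
        r (insert e T) = r T := by
      intro S T e hST he
      by_cases heT : e ∈ T
      · rw [Finset.insert_eq_self.2 heT]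
      · have hu : insert e S ∪ T = insert e T := by
          rw [Finset.insert_union, Finset.union_eq_right.2 hST]
        have hi : insert e S ∩ T = S := by
          ext x
          simp only [Finset.mem_inter, Finset.mem_insert]
          constructor
          · rintro ⟨rfl | hx, hxT⟩
            · exact absurd hxT heT
            · exact hx
          · exact fun hx => ⟨Or.inr hx, hST hx⟩
        have h1 := hsub (insert e S) T
        rw [hu, hi, he] at h1
        have h2 := hmono T (insert e T) (Finset.subset_insert _ _)
        omega
    have hspan : ∀ S T : Finset E, (∀ e ∈ T, r (insert e S) = r S) → r (S ∪ T) = r S := by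
      intro S T
      induction T using Finset.induction with
      | empty => intro _; rw [Finset.union_empty]
      | @insert a T ha ih =>
        intro h
        rw [Finset.union_insert]
        have h1 : r (insert a (S ∪ T)) = r (S ∪ T) :=
          hclos S (S ∪ T) a Finset.subset_union_left (h a (Finset.mem_insert_self _ _))
        rw [h1]
        exact ih fun e he => h e (Finset.mem_insert_of_mem he)
    have htight : ∀ D D' : Finset C, r (A D) = ∑ c ∈ D, f c → r (A D') = ∑ c ∈ D', f c →
        r (A (D ∪ D')) = ∑ c ∈ D ∪ D', f c := by
      intro D D' h1 h2
      have hs := hsub (A D) (A D')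
      rw [← hAunion, ← hAinter, h1, h2] at hs
      have hu := hcond' (D ∪ D')
      have hi := hcond' (D ∩ D')
      have hse : ∑ c ∈ D ∪ D', f c + ∑ c ∈ D ∩ D', f c = ∑ c ∈ D, f c + ∑ c ∈ D', f c :=
        Finset.sum_union_inter
      omega
    by_cases hex : ∃ e, e ∈ ground ∧ color e = c0 ∧ r {e} = 1 ∧
        ∀ D : Finset C, c0 ∉ D → ∑ c ∈ D, f c + 1 ≤ r (insert e (A D))
    · obtain ⟨e, heg, hec, hre1, hegood⟩ := hex
      have hr1 : ∀ T : Finset E, 1 ≤ r (insert e T) := by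
        intro T
        have h1 := hmono {e} (insert e T)
          (Finset.singleton_subset_iff.2 (Finset.mem_insert_self _ _))
        omega
      have hsum' : ∑ c, Function.update f c0 (f c0 - 1) c = N := by
        rw [Finset.sum_update_of_mem (mem_univ c0)]
        have h1 := Finset.add_sum_erase Finset.univ f (mem_univ c0)
        rw [Finset.sdiff_singleton_eq_erase]
        omega
      have h0' : r (insert e ∅) - 1 = 0 := by
        have : (insert e ∅ : Finset E) = {e} := rfl
        rw [this, hre1]
      obtain ⟨S', hS'g, hS'r, hS'c⟩ :=
        ihN (fun T => r (insert e T) - 1) (Function.update f c0 (f c0 - 1))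
          (ground.erase e) color hsum' h0'
          (fun S T hST => Nat.sub_le_sub_right
            (hmono _ _ (Finset.insert_subset_insert e hST)) 1)
          (fun S a => by
            show r (insert e (insert a S)) - 1 ≤ r (insert e S) - 1 + 1
            have h1 : insert e (insert a S) = insert a (insert e S) := Finset.insert_comm _ _ _
            rw [h1]
            have h2 := hunit (insert e S) a
            have h3 := hr1 S
            omega)
          (fun S T => by
            show r (insert e (S ∪ T)) - 1 + (r (insert e (S ∩ T)) - 1) ≤
              (r (insert e S) - 1) + (r (insert e T) - 1)
            have h1 : insert e S ∪ insert e T = insert e (S ∪ T) :=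
              (Finset.insert_union_distrib _ _ _).symm
            have h2 : insert e S ∩ insert e T = insert e (S ∩ T) :=
              (Finset.insert_inter_distrib _ _ _).symm
            have h3 := hsub (insert e S) (insert e T)
            rw [h1, h2] at h3
            have h4 := hr1 (S ∪ T)
            have h5 := hr1 (S ∩ T)
            have h6 := hr1 S
            have h7 := hr1 T
            omega)
          (fun D => by
            show _ ≤ r (insert e ((ground.erase e).filter fun x => color x ∈ D)) - 1
            have hfe : (ground.erase e).filter (fun x => color x ∈ D) = (A D).erase e := by
              rw [hA, Finset.filter_erase]
            rw [hfe]
            by_cases hD : c0 ∈ D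
            · have heA : e ∈ A D := by
                simp only [hA, Finset.mem_filter]
                exact ⟨heg, by rw [hec]; exact hD⟩
              rw [Finset.insert_erase heA]
              have h1 := hcond' D
              have h2 : ∑ c ∈ D, Function.update f c0 (f c0 - 1) c = ∑ c ∈ D, f c - 1 := by
                rw [Finset.sum_update_of_mem hD, Finset.sdiff_singleton_eq_erase]
                have h3 := Finset.add_sum_erase D f hD
                omega
              omega
            · have heA : e ∉ A D := by
                simp only [hA, Finset.mem_filter, hec]
                exact fun h => hD h.2
              rw [Finset.erase_eq_of_notMem heA]
              have h1 := hegood D hD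
              have h2 : ∑ c ∈ D, Function.update f c0 (f c0 - 1) c = ∑ c ∈ D, f c :=
                Finset.sum_congr rfl fun c hc =>
                  Function.update_of_ne (fun h => hD (by rw [← h]; exact hc)) _ f
              omega)
      have heS' : e ∉ S' := fun h => (Finset.mem_erase.1 (hS'g h)).1 rfl
      refine ⟨insert e S', ?_, ?_, ?_⟩
      · exact Finset.insert_subset heg (hS'g.trans (Finset.erase_subset _ _))
      · rw [Finset.card_insert_of_notMem heS']
        have h1 := hr1 S'
        omega
      · intro c
        by_cases hc : c = c0
        · rw [Finset.filter_insert, if_pos (hec.trans hc.symm),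
            Finset.card_insert_of_notMem (fun h => heS' (Finset.mem_filter.1 h).1)]
          have h1 := hS'c c
          rw [hc, Function.update_self] at h1
          rw [hc]
          omega
        · rw [Finset.filter_insert, if_neg (fun h => hc (hec.symm.trans h).symm)]
          have h1 := hS'c c
          rwa [Function.update_of_ne hc] at h1
    · exfalso
      push_neg at hex
      have hDe : ∀ e ∈ A {c0}, ∃ D : Finset C, c0 ∉ D ∧ r (A D) = ∑ c ∈ D, f c ∧
          r (insert e (A D)) = r (A D) := by
        intro e he
        obtain ⟨heg, hec⟩ := Finset.mem_filter.1 he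
        rw [Finset.mem_singleton] at hec
        have hre_le : r {e} ≤ 1 := by
          have h1 := hunit ∅ e
          have h2 : (insert e ∅ : Finset E) = {e} := rfl
          rw [h2, h0] at h1
          exact h1
        by_cases hre : r {e} = 1
        · obtain ⟨D, hD0, hDlt⟩ := hex e heg hec hre
          have h1 : r (insert e (A D)) ≤ ∑ c ∈ D, f c := by omega
          have h2 := hcond' D
          have h3 := hmono (A D) (insert e (A D)) (Finset.subset_insert _ _)
          exact ⟨D, hD0, by omega, by omega⟩
        · have hre0 : r {e} = 0 := by omega
          refine ⟨∅, Finset.notMem_empty _, by rw [hAempty, h0]; simp, ?_⟩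
          rw [hAempty]
          have h2 : (insert e ∅ : Finset E) = {e} := rfl
          rw [h2, hre0, h0]
      have hcomb : ∀ T : Finset E, T ⊆ A {c0} → ∃ D : Finset C, c0 ∉ D ∧
          r (A D) = ∑ c ∈ D, f c ∧ ∀ e ∈ T, r (insert e (A D)) = r (A D) := by
        intro T
        induction T using Finset.induction with
        | empty =>
          intro _
          exact ⟨∅, Finset.notMem_empty _, by rw [hAempty, h0]; simp,
            fun e h => absurd h (Finset.notMem_empty e)⟩
        | @insert a T ha ih =>
          intro hT
          obtain ⟨D, hD0, hDt, hDsp⟩ := ih ((Finset.subset_insert _ _).trans hT)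
          obtain ⟨D', hD'0, hD't, hD'e⟩ := hDe a (hT (Finset.mem_insert_self _ _))
          refine ⟨D ∪ D', by simp [hD0, hD'0], htight _ _ hDt hD't, ?_⟩
          intro x hx
          rcases Finset.mem_insert.1 hx with rfl | hx
          · exact hclos (A D') (A (D ∪ D')) x (hAmono Finset.subset_union_right) hD'e
          · exact hclos (A D) (A (D ∪ D')) x (hAmono Finset.subset_union_left) (hDsp x hx)
      obtain ⟨D, hD0, hDt, hDsp⟩ := hcomb (A {c0}) Finset.Subset.rfl
      have hU : r (A D ∪ A {c0}) = r (A D) := hspan _ _ hDsp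
      rw [← hAunion] at hU
      have h1 := hcond' (D ∪ {c0})
      have h2 : ∑ c ∈ D ∪ {c0}, f c = ∑ c ∈ D, f c + f c0 := by
        rw [Finset.sum_union (Finset.disjoint_singleton_right.2 hD0), Finset.sum_singleton]
      rw [hU, hDt] at h1
      omega

theorem stmt5 {V C : Type*} [Fintype V] [Fintype C] (G : SimpleGraph V)
    (color : Sym2 V → C) (f : C → ℕ) (n m : ℕ) (hn : Fintype.card V = n)
    (hm : m ≤ n) (hsum : ∑ c, f c = n - m) :
    (∃ F : SimpleGraph V, F ≤ G ∧ F.IsAcyclic ∧ omega F = m ∧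
        ∀ c, colorCount F color c = f c) ↔
      ∀ R : Finset C, omega (delR G color R) ≤ m + ∑ c ∈ R, f c := by
  classical
  subst hn
  have hCC : ∀ (H : SimpleGraph V) (c : C), colorCount H color c
      = (H.edgeFinset.filter fun e => color e = c).card := by
    intro H c
    rw [colorCount, Nat.card_eq_fintype_card, Fintype.card_subtype]
    have h1 : (Finset.univ.filter fun e => e ∈ H.edgeSet ∧ color e = c)
        = H.edgeFinset.filter fun e => color e = c := by
      ext e
      simp [mem_edgeFinset]
    rw [h1]
  have hfiber : ∀ S : Finset (Sym2 V),
      S.card = ∑ c, (S.filter fun e => color e = c).card :=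
    fun S => Finset.card_eq_sum_card_fiberwise fun x _ => Finset.mem_univ (color x)
  constructor
  · rintro ⟨F, hFG, hFac, hFomega, hFcnt⟩ R
    have hSFd : ∀ e ∈ F.edgeFinset, ¬e.IsDiag :=
      fun e he => F.not_isDiag_of_mem_edgeSet (mem_edgeFinset.1 he)
    have hSFcard : F.edgeFinset.card = Fintype.card V - m := by
      rw [hfiber F.edgeFinset, ← hsum]
      exact Finset.sum_congr rfl fun c _ => by rw [← hCC, hFcnt]
    set T : Finset (Sym2 V) := F.edgeFinset.filter (fun e => color e ∉ R) with hT
    have hTG : fromEdgeSet (T : Set (Sym2 V)) = delR F color R := by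
      have h1 : (T : Set (Sym2 V)) = (delR F color R).edgeSet := by
        ext e
        simp only [hT, Finset.coe_filter, Set.mem_setOf_eq, mem_edgeFinset, delR,
          edgeSet_deleteEdges, Set.mem_diff]
      rw [h1, fromEdgeSet_edgeSet]
    have hTacy : (fromEdgeSet (T : Set (Sym2 V))).IsAcyclic := by
      rw [hTG]
      intro v c hc
      exact hFac (c.mapLe (deleteEdges_le _)) (hc.mapLe _)
    have hfc := forest_count T (fun e he => hSFd e (Finset.mem_filter.1 he).1)
    have homegaT : omega (fromEdgeSet (T : Set (Sym2 V))) + T.card = Fintype.card V :=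
      hfc.2.1 hTacy
    have hsplit : (F.edgeFinset.filter fun e => color e ∈ R).card + T.card
        = F.edgeFinset.card := by
      rw [hT]
      exact Finset.card_filter_add_card_filter_not _
    have hRcard : (F.edgeFinset.filter fun e => color e ∈ R).card = ∑ c ∈ R, f c := by
      rw [Finset.card_eq_sum_card_fiberwise
        (f := color) (s := F.edgeFinset.filter fun e => color e ∈ R) (t := R) (fun x hx => (Finset.mem_filter.1 hx).2)]
      refine Finset.sum_congr rfl fun c hc => ?_
      rw [Finset.filter_filter]
      have h2 : F.edgeFinset.filter (fun e => color e ∈ R ∧ color e = c)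
          = F.edgeFinset.filter fun e => color e = c := by
        ext e
        simp only [Finset.mem_filter]
        constructor
        · exact fun h => ⟨h.1, h.2.2⟩
        · exact fun h => ⟨h.1, h.2 ▸ hc, h.2⟩
      rw [h2, ← hCC, hFcnt]
    have hmonoG : omega (delR G color R) ≤ omega (delR F color R) := by
      simp only [delR]
      exact omega_mono (deleteEdges_mono hFG)
    have hRle : ∑ c ∈ R, f c ≤ Fintype.card V - m := by
      rw [← hsum]
      exact Finset.sum_le_sum_of_subset (Finset.subset_univ R)
    rw [← hTG] at hmonoG
    omega
  · intro hcond
    have hradocond : ∀ D : Finset C, ∑ c ∈ D, f c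
        ≤ rk (G.edgeFinset.filter fun e => color e ∈ D) := by
      intro D
      have hDc : fromEdgeSet ((G.edgeFinset.filter fun e => color e ∈ D) : Set (Sym2 V))
          = delR G color Dᶜ := by
        have h1 : ((G.edgeFinset.filter fun e => color e ∈ D) : Set (Sym2 V))
            = (delR G color Dᶜ).edgeSet := by
          ext e
          simp only [Finset.coe_filter, Set.mem_setOf_eq, mem_edgeFinset, delR,
            edgeSet_deleteEdges, Set.mem_diff, Finset.mem_compl]
          tauto
        rw [h1, fromEdgeSet_edgeSet]
      have h2 := hcond Dᶜ
      have h3 : ∑ c ∈ D, f c + ∑ c ∈ Dᶜ, f c = Fintype.card V - m := by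
        rw [Finset.sum_add_sum_compl]
        exact hsum
      have h4 := omega_le_card (delR G color Dᶜ)
      simp only [rk]
      rw [hDc]
      omega
    obtain ⟨S, hSg, hSr, hScnt⟩ := rado (Fintype.card V - m) rk f G.edgeFinset color hsum
      rk_empty (fun S T h => rk_mono h) (fun S e => rk_insert_le S e)
      (fun S T => rk_submod S T) hradocond
    have hSd : ∀ e ∈ S, ¬e.IsDiag :=
      fun e he => G.not_isDiag_of_mem_edgeSet (mem_edgeFinset.1 (hSg he))
    have hfc := forest_count S hSd
    have hcard : S.card = Fintype.card V - m := by
      rw [hfiber S, ← hsum]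
      exact Finset.sum_congr rfl fun c _ => hScnt c
    have hωle := omega_le_card (fromEdgeSet (S : Set (Sym2 V)))
    simp only [rk] at hSr
    have heq : omega (fromEdgeSet (S : Set (Sym2 V))) + S.card = Fintype.card V := by
      omega
    refine ⟨fromEdgeSet (S : Set (Sym2 V)), ?_, hfc.2.mpr heq, by omega, ?_⟩
    · have h1 : fromEdgeSet (S : Set (Sym2 V)) ≤ fromEdgeSet (G.edgeFinset : Set (Sym2 V)) :=
        fromEdgeSet_mono (Finset.coe_subset.2 hSg)
      rwa [coe_edgeFinset, fromEdgeSet_edgeSet] at h1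
    · intro c
      rw [hCC]
      convert hScnt c using 2
      ext e
      simp only [Finset.mem_filter, mem_edgeFinset, edgeSet_fromEdgeSet, Set.mem_diff,
        Finset.mem_coe, Set.mem_setOf_eq]
      exact ⟨fun h => ⟨h.1.1, h.2⟩, fun h => ⟨⟨h.1, hSd e h.1⟩, h.2⟩⟩
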